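/- Let 𝕂 be a field of characteristic 0, p ∈ 𝕂[x₁,…,xₙ], ω a polynomial in n variables, and ξ ∈ 𝕂ⁿ. Let p(ξ+∂)(ω) denote the polynomial obtained by substituting each variable xᵢ of p by the operator ξᵢ·id + ∂/∂yᵢ (these operators pairwise commute) and applying the resulting operator to ω. Then p ⋆ (ω·e_ξ) = (p(ξ+∂)(ω))·e_ξ; equivalently, for every q ∈ 𝕂[x₁,…,xₙ] one has (ω(∂)(p·q))(ξ) = ((p(ξ+∂)(ω))(∂)q)(ξ). -/

import Mathlib

open MvPolynomial

namespace PolyExp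

variable {K : Type*} [Field K] {n : ℕ}

/-- The iterated partial derivative operator `∂^β` on polynomials. -/
noncomputable def pderivPow (β : Fin n →₀ ℕ) :
    Module.End K (MvPolynomial (Fin n) K) :=
  (List.ofFn fun i : Fin n =>
    ((MvPolynomial.pderiv i).toLinearMap : Module.End K (MvPolynomial (Fin n) K)) ^ (β i)).prod

/-- The constant coefficient differential operator `ω(∂) = Σ_β ω_β ∂^β`. -/
noncomputable def diffOp (ω : MvPolynomial (Fin n) K) :
    Module.End K (MvPolynomial (Fin n) K) :=
  ∑ β ∈ ω.support, ω.coeff β • pderivPow β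

/-- The evaluation linear form `e_ξ : p ↦ p(ξ)`. -/
noncomputable def evalDual (ξ : Fin n → K) : Module.Dual K (MvPolynomial (Fin n) K) :=
  (MvPolynomial.aeval ξ).toLinearMap

/-- The polynomial-exponential linear form `ω·e_ξ : p ↦ (ω(∂)p)(ξ)`. -/
noncomputable def polyExpDual (ω : MvPolynomial (Fin n) K) (ξ : Fin n → K) :
    Module.Dual K (MvPolynomial (Fin n) K) :=
  evalDual ξ ∘ₗ diffOp ω

/-- The Hankel operator `H_σ : p ↦ (q ↦ σ(p·q))`. -/
noncomputable def hankel (σ : Module.Dual K (MvPolynomial (Fin n) K)) :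
    MvPolynomial (Fin n) K →ₗ[K] Module.Dual K (MvPolynomial (Fin n) K) :=
  (LinearMap.llcomp K (MvPolynomial (Fin n) K) (MvPolynomial (Fin n) K) K σ) ∘ₗ
    (LinearMap.mul K (MvPolynomial (Fin n) K))

/-- `μ(ω)`: the dimension of the span of all partial derivatives of `ω`. -/
noncomputable def mu (ω : MvPolynomial (Fin n) K) : ℕ :=
  Module.finrank K (Submodule.span K (Set.range fun β : Fin n →₀ ℕ => pderivPow β ω))

/-- The kernel `I_σ` of the Hankel operator, as an ideal. -/
def hankelKer (σ : Module.Dual K (MvPolynomial (Fin n) K)) : Ideal (MvPolynomial (Fin n) K) where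
  carrier := {p | ∀ q, σ (p * q) = 0}
  add_mem' := by
    intro a b ha hb q
    rw [add_mul, map_add, ha q, hb q, add_zero]
  zero_mem' := by
    intro q
    rw [zero_mul, map_zero]
  smul_mem' := by
    intro c p hp q
    rw [smul_eq_mul, mul_comm c p, mul_assoc]
    exact hp (c * q)

noncomputable abbrev Dop (i : Fin n) : Module.End K (MvPolynomial (Fin n) K) :=
  (MvPolynomial.pderiv i).toLinearMap

noncomputable abbrev Mop (i : Fin n) : Module.End K (MvPolynomial (Fin n) K) :=
  LinearMap.mulLeft K (MvPolynomial.X i)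

lemma ofFn_prod_pow_add {M : Type*} [Monoid M] : ∀ {m : ℕ} (f : Fin m → M),
    (∀ i j, Commute (f i) (f j)) → ∀ (β γ : Fin m → ℕ),
    (List.ofFn fun i => f i ^ (β i + γ i)).prod =
      (List.ofFn fun i => f i ^ β i).prod * (List.ofFn fun i => f i ^ γ i).prod := by
  intro m
  induction m with
  | zero => intro f hf β γ; simp
  | succ m ih =>
    intro f hf β γ
    simp only [List.ofFn_succ, List.prod_cons]
    rw [ih (fun i => f i.succ) (fun i j => hf i.succ j.succ) (fun i => β i.succ)
      (fun i => γ i.succ), pow_add]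
    have hc : Commute (f 0 ^ γ 0) (List.ofFn fun i => f i.succ ^ β i.succ).prod := by
      apply Commute.list_prod_right
      intro x hx
      rw [List.mem_ofFn] at hx
      obtain ⟨j, rfl⟩ := hx
      exact (hf 0 j.succ).pow_pow _ _
    rw [mul_assoc, mul_assoc, ← mul_assoc (f 0 ^ γ 0), hc.eq, mul_assoc]

lemma ofFn_prod_eq_single {M : Type*} [Monoid M] : ∀ {m : ℕ} (f : Fin m → M) (i : Fin m),
    (∀ j, j ≠ i → f j = 1) → (List.ofFn f).prod = f i := by
  intro m
  induction m with
  | zero => exact fun f i => i.elim0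
  | succ m ih =>
    intro f i h
    simp only [List.ofFn_succ, List.prod_cons]
    induction i using Fin.cases with
    | zero =>
      have : (List.ofFn fun j : Fin m => f j.succ).prod = 1 := by
        apply List.prod_eq_one
        intro x hx
        rw [List.mem_ofFn] at hx
        obtain ⟨j, rfl⟩ := hx
        exact h j.succ (Fin.succ_ne_zero j)
      rw [this, mul_one]
    | succ i =>
      rw [h 0 (Fin.succ_ne_zero i).symm, one_mul]
      exact ih (fun j => f j.succ) i (fun j hj => h j.succ (by simpa using hj))

lemma pderiv_comm' (i j : Fin n) (p : MvPolynomial (Fin n) K) :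
    pderiv i (pderiv j p) = pderiv j (pderiv i p) := by
  induction p using MvPolynomial.induction_on' with
  | monomial β c =>
    rcases eq_or_ne i j with rfl | hij
    · rfl
    · simp only [pderiv_monomial]
      congr 1
      · congr 1
        ext k
        simp only [Finsupp.tsub_apply, Finsupp.single_apply]
        omega
      · have h2 : ((β - Finsupp.single j 1 : Fin n →₀ ℕ) : (Fin n) → ℕ) i = β i := by
          simp only [Finsupp.coe_tsub, Pi.sub_apply, Finsupp.single_apply,
            if_neg (Ne.symm hij), Nat.sub_zero]
        have h3 : ((β - Finsupp.single i 1 : Fin n →₀ ℕ) : (Fin n) → ℕ) j = β j := by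
          simp only [Finsupp.coe_tsub, Pi.sub_apply, Finsupp.single_apply,
            if_neg hij, Nat.sub_zero]
        rw [show ((β - Finsupp.single j 1 : Fin n →₀ ℕ)) i = β i from h2,
          show ((β - Finsupp.single i 1 : Fin n →₀ ℕ)) j = β j from h3]
        ring
  | add p q hp hq => simp [hp, hq]

lemma commute_pderiv (i j : Fin n) :
    Commute (Dop (K := K) i) (Dop j) :=
  LinearMap.ext fun p => pderiv_comm' i j p

lemma pderivPow_add (β γ : Fin n →₀ ℕ) :
    pderivPow (β + γ) = (pderivPow β : Module.End K (MvPolynomial (Fin n) K)) * pderivPow γ := by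
  unfold pderivPow
  simp only [Finsupp.add_apply]
  exact ofFn_prod_pow_add _ commute_pderiv _ _

lemma pderivPow_zero :
    (pderivPow (0 : Fin n →₀ ℕ) : Module.End K (MvPolynomial (Fin n) K)) = 1 := by
  unfold pderivPow
  simp

lemma pderivPow_single (i : Fin n) (k : ℕ) :
    (pderivPow (Finsupp.single i k) : Module.End K (MvPolynomial (Fin n) K)) = Dop i ^ k := by
  unfold pderivPow
  rw [ofFn_prod_eq_single _ i fun j hj => by
    rw [Finsupp.single_apply, if_neg fun h => hj h.symm, pow_zero]]
  rw [Finsupp.single_eq_same]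

lemma pderivPow_decomp (β : Fin n →₀ ℕ) (i : Fin n) :
    (pderivPow β : Module.End K (MvPolynomial (Fin n) K))
      = Dop i ^ (β i) * pderivPow (β.erase i) := by
  conv_lhs => rw [← Finsupp.single_add_erase i β]
  rw [pderivPow_add, pderivPow_single]

lemma commute_mulX_pderiv {i j : Fin n} (h : j ≠ i) :
    Commute (Mop (K := K) i) (Dop j) := by
  apply LinearMap.ext
  intro q
  simp only [Module.End.mul_apply, LinearMap.mulLeft_apply, LinearMap.coe_mk,
    Derivation.coeFn_coe, LinearMap.coe_coe]
  show X i * pderiv j q = pderiv j (X i * q)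
  rw [pderiv_mul, pderiv_X_of_ne (Ne.symm h), zero_mul, zero_add]

lemma commute_mulX_pderivPow {γ : Fin n →₀ ℕ} (i : Fin n) (h : γ i = 0) :
    Commute (Mop (K := K) i) (pderivPow γ : Module.End K (MvPolynomial (Fin n) K)) := by
  unfold pderivPow
  apply Commute.list_prod_right
  intro x hx
  rw [List.mem_ofFn] at hx
  obtain ⟨j, rfl⟩ := hx
  rcases eq_or_ne j i with rfl | hj
  · simp only [h, pow_zero]; exact Commute.one_right _
  · exact (commute_mulX_pderiv hj).pow_right _

lemma pderiv_mulX_comm (i : Fin n) :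
    Dop (K := K) i * Mop i = Mop i * Dop i + 1 := by
  apply LinearMap.ext
  intro q
  simp only [Module.End.mul_apply, LinearMap.add_apply, LinearMap.mulLeft_apply,
    Module.End.one_apply, LinearMap.coe_coe]
  show pderiv i (X i * q) = X i * pderiv i q + q
  rw [pderiv_mul, pderiv_X_self, one_mul, add_comm]

lemma pow_pderiv_mulX (i : Fin n) (k : ℕ) :
    Dop (K := K) i ^ (k + 1) * Mop i
      = Mop i * Dop i ^ (k + 1) + (k + 1) • Dop (K := K) i ^ k := by
  induction k with
  | zero =>
    rw [zero_add, pow_one, pow_zero, one_smul]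
    exact pderiv_mulX_comm i
  | succ k ih =>
    have h2 : Dop (K := K) i ^ (k + 1 + 1) = Dop i * Dop i ^ (k + 1) := pow_succ' _ _
    have h3 : Dop (K := K) i ^ (k + 1) = Dop i * Dop i ^ k := pow_succ' _ _
    rw [h2, mul_assoc, ih, mul_add, ← mul_assoc, pderiv_mulX_comm i, add_mul, one_mul,
      mul_assoc, ← h2, mul_smul_comm, ← h3, succ_nsmul (Dop (K := K) i ^ (k + 1)) (k + 1)]
    abel



lemma pderivPow_mulX (β : Fin n →₀ ℕ) (i : Fin n) :
    (pderivPow β : Module.End K (MvPolynomial (Fin n) K)) * Mop i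
      = Mop i * pderivPow β
        + (β i) • (pderivPow (β - Finsupp.single i 1) : Module.End K (MvPolynomial (Fin n) K)) := by
  cases h : β i with
  | zero =>
    rw [zero_smul, add_zero]
    exact ((commute_mulX_pderivPow i h).eq).symm
  | succ k =>
    have hβ' : β - Finsupp.single i 1 = Finsupp.single i k + β.erase i := by
      ext j
      rcases eq_or_ne j i with rfl | hj
      · simp only [Finsupp.tsub_apply, Finsupp.single_eq_same, Finsupp.add_apply,
          Finsupp.erase_same, h, add_zero, Nat.add_sub_cancel]
      · simp only [Finsupp.tsub_apply, Finsupp.add_apply, Finsupp.erase_ne hj,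
          Finsupp.single_apply, if_neg (Ne.symm hj), Nat.sub_zero, zero_add]
    have e1 : (pderivPow β : Module.End K (MvPolynomial (Fin n) K))
        = Dop (K := K) i ^ (k + 1) * pderivPow (β.erase i) := by
      rw [pderivPow_decomp β i, h]
    have e2 : (pderivPow (β - Finsupp.single i 1) : Module.End K (MvPolynomial (Fin n) K))
        = Dop (K := K) i ^ k * pderivPow (β.erase i) := by
      rw [hβ', pderivPow_add, pderivPow_single]
    have hcomm := commute_mulX_pderivPow (γ := β.erase i) (K := K) i (Finsupp.erase_same)
    rw [e1, e2, mul_assoc, ← hcomm.eq, ← mul_assoc, pow_pderiv_mulX i k, add_mul, mul_assoc,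
      smul_mul_assoc]

lemma diffOp_eq_sum {ω : MvPolynomial (Fin n) K} {s : Finset (Fin n →₀ ℕ)}
    (h : ω.support ⊆ s) :
    diffOp ω = ∑ β ∈ s, ω.coeff β • (pderivPow β : Module.End K (MvPolynomial (Fin n) K)) :=
  Finset.sum_subset h fun β _ hβ => by
    rw [MvPolynomial.notMem_support_iff.mp hβ, zero_smul]

lemma diffOp_add (a b : MvPolynomial (Fin n) K) :
    diffOp (a + b) = diffOp a + diffOp b := by
  classical
  set s := (a.support ∪ b.support) ∪ (a + b).support with hs
  rw [diffOp_eq_sum (ω := a + b) (s := s) Finset.subset_union_right,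
    diffOp_eq_sum (ω := a) (s := s) (Finset.subset_union_left.trans Finset.subset_union_left),
    diffOp_eq_sum (ω := b) (s := s) (Finset.subset_union_right.trans Finset.subset_union_left),
    ← Finset.sum_add_distrib]
  exact Finset.sum_congr rfl fun β _ => by rw [MvPolynomial.coeff_add, add_smul]

lemma diffOp_smul (c : K) (a : MvPolynomial (Fin n) K) :
    diffOp (c • a) = c • diffOp a := by
  rw [diffOp_eq_sum (ω := c • a) (s := a.support) MvPolynomial.support_smul]
  unfold diffOp
  rw [Finset.smul_sum]
  exact Finset.sum_congr rfl fun β _ => by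
    rw [MvPolynomial.coeff_smul, smul_eq_mul, smul_smul]

lemma diffOp_monomial (β : Fin n →₀ ℕ) (c : K) :
    diffOp (monomial β c) = c • (pderivPow β : Module.End K (MvPolynomial (Fin n) K)) := by
  classical
  rw [diffOp_eq_sum (ω := monomial β c) (s := {β}) (by
    rw [MvPolynomial.support_monomial]
    split_ifs <;> simp), Finset.sum_singleton, MvPolynomial.coeff_monomial, if_pos rfl]

lemma diffOp_C (a : K) :
    diffOp (C a : MvPolynomial (Fin n) K) = a • (1 : Module.End K (MvPolynomial (Fin n) K)) := by
  rw [MvPolynomial.C_apply, diffOp_monomial, pderivPow_zero]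

lemma diffOp_X_mul (i : Fin n) (a : MvPolynomial (Fin n) K) :
    diffOp (X i * a) = Dop i * diffOp a := by
  induction a using MvPolynomial.induction_on' with
  | monomial β c =>
    rw [show (X i : MvPolynomial (Fin n) K) = monomial (Finsupp.single i 1) 1 from rfl,
      MvPolynomial.monomial_mul, one_mul, diffOp_monomial, diffOp_monomial, pderivPow_add,
      pderivPow_single, pow_one, mul_smul_comm]
  | add p q hp hq => rw [mul_add, diffOp_add, hp, hq, diffOp_add, mul_add]

lemma diffOp_mulX_op (ω : MvPolynomial (Fin n) K) (i : Fin n) :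
    diffOp ω * Mop i = Mop i * diffOp ω + diffOp (pderiv i ω) := by
  induction ω using MvPolynomial.induction_on' with
  | monomial β c =>
    rw [diffOp_monomial, pderiv_monomial, diffOp_monomial, smul_mul_assoc, pderivPow_mulX,
      smul_add, mul_smul_comm, ← Nat.cast_smul_eq_nsmul K (β i), smul_smul]
  | add p q hp hq =>
    rw [diffOp_add, map_add, diffOp_add, add_mul, hp, hq, mul_add, add_add_add_comm]

lemma Dop_apply (i : Fin n) (f : MvPolynomial (Fin n) K) : Dop (K := K) i f = pderiv i f := rfl




lemma hankel_apply (σ : Module.Dual K (MvPolynomial (Fin n) K)) (p q : MvPolynomial (Fin n) K) :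
    hankel σ p q = σ (p * q) := rfl

lemma polyExpDual_apply (ω : MvPolynomial (Fin n) K) (ξ : Fin n → K)
    (q : MvPolynomial (Fin n) K) :
    polyExpDual ω ξ q = MvPolynomial.aeval ξ (diffOp ω q) := rfl

lemma polyExpDual_add (a b : MvPolynomial (Fin n) K) (ξ : Fin n → K) :
    polyExpDual (a + b) ξ = polyExpDual a ξ + polyExpDual b ξ := by
  apply LinearMap.ext
  intro q
  rw [LinearMap.add_apply, polyExpDual_apply, polyExpDual_apply, polyExpDual_apply, diffOp_add,
    LinearMap.add_apply, map_add]

lemma polyExpDual_smul (c : K) (a : MvPolynomial (Fin n) K) (ξ : Fin n → K) :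
    polyExpDual (c • a) ξ = c • polyExpDual a ξ := by
  apply LinearMap.ext
  intro q
  rw [LinearMap.smul_apply, polyExpDual_apply, polyExpDual_apply, diffOp_smul,
    LinearMap.smul_apply, map_smul]

end PolyExp

/-- For a field `𝕂` of characteristic 0, `p ⋆ (ω·e_ξ) = (p(ξ+∂)(ω))·e_ξ`,
where `p(ξ+∂)` is the differential operator obtained from the shifted polynomial
`p(ξ + y) = Σ_β c_β y^β`, i.e. substituting each variable `xᵢ` of `p` by `ξᵢ·id + ∂ᵢ`. -/
theorem statement0 {K : Type*} [Field K] [CharZero K] {n : ℕ}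
    (p ω : MvPolynomial (Fin n) K) (ξ : Fin n → K) :
    PolyExp.hankel (PolyExp.polyExpDual ω ξ) p =
      PolyExp.polyExpDual
        (PolyExp.diffOp ((MvPolynomial.aeval fun i => MvPolynomial.X i + MvPolynomial.C (ξ i)) p) ω)
        ξ := by
  induction p using MvPolynomial.induction_on with
  | C a =>
    apply LinearMap.ext
    intro q
    rw [PolyExp.hankel_apply, PolyExp.polyExpDual_apply, ← MvPolynomial.smul_eq_C_mul,
      map_smul, map_smul, aeval_C, MvPolynomial.algebraMap_eq, PolyExp.diffOp_C,
      LinearMap.smul_apply, Module.End.one_apply, PolyExp.polyExpDual_smul,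
      LinearMap.smul_apply, PolyExp.polyExpDual_apply]
  | add f g hf hg =>
    rw [map_add, hf, hg, map_add, PolyExp.diffOp_add, LinearMap.add_apply,
      PolyExp.polyExpDual_add]
  | mul_X f i hf =>
    apply LinearMap.ext
    intro q
    have hL : PolyExp.hankel (PolyExp.polyExpDual ω ξ) (f * X i) q
        = PolyExp.hankel (PolyExp.polyExpDual ω ξ) f (X i * q) := by
      rw [PolyExp.hankel_apply, PolyExp.hankel_apply, mul_assoc]
    rw [hL, hf]
    set sp := (MvPolynomial.aeval fun j => MvPolynomial.X j + MvPolynomial.C (ξ j)) f with hsp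
    set ω' := PolyExp.diffOp sp ω with hω'
    have hsplit : (MvPolynomial.aeval fun j => MvPolynomial.X j + MvPolynomial.C (ξ j)) (f * X i)
        = X i * sp + ξ i • sp := by
      rw [map_mul, MvPolynomial.aeval_X, mul_add]
      congr 1
      · rw [mul_comm]
      · rw [MvPolynomial.smul_eq_C_mul, mul_comm]
    rw [hsplit, PolyExp.diffOp_add, PolyExp.diffOp_X_mul, PolyExp.diffOp_smul,
      LinearMap.add_apply, LinearMap.smul_apply, Module.End.mul_apply]
    have keyq : PolyExp.diffOp ω' (X i * q)
        = X i * PolyExp.diffOp ω' q + PolyExp.diffOp (pderiv i ω') q := by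
      have h0 := LinearMap.ext_iff.mp (PolyExp.diffOp_mulX_op ω' i) q
      simpa [Module.End.mul_apply, LinearMap.mulLeft_apply, LinearMap.add_apply] using h0
    rw [PolyExp.polyExpDual_apply, keyq, map_add, map_mul, MvPolynomial.aeval_X,
      PolyExp.polyExpDual_add, PolyExp.polyExpDual_smul, LinearMap.add_apply,
      LinearMap.smul_apply, PolyExp.polyExpDual_apply, PolyExp.polyExpDual_apply,
      PolyExp.Dop_apply]
    rw [smul_eq_mul]
    ring
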